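/- Consider a process with parameters p₁ ∈ (0,1], γ ∈ (0,1]: at each step, independently succeed with probability p₁ (halt), else halt with probability γ (outputting ⊥), else continue; run for at most T ≥ (1/γ)ln(2/ε₀) steps with ε₀ ≤ 1. Then Pr[output ⊥] ≤ ((1-p₁)(1+ε₀/2)/p₁)·γ. -/

import Mathlib

set_option maxHeartbeats 1600000 in
/-- Consider the process with parameters `p₁ ∈ (0,1]`, `γ ∈ (0,1]`: at each step,
independently succeed with probability `p₁` (halt), else halt with probability `γ`
(outputting `⊥`), else continue; run for at most `T ≥ (1/γ)·ln(2/ε₀)` steps, where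
`0 < ε₀ ≤ 1`.  Then the probability of outputting `⊥`, namely
`∑_{j=1}^{T} ((1-p₁)(1-γ))^{j-1}(1-p₁)γ + ((1-p₁)(1-γ))^T`, is at most
`((1-p₁)(1+ε₀/2)/p₁)·γ`. -/
theorem stmt10 (p₁ γ ε₀ : ℝ) (T : ℕ)
    (hp : p₁ ∈ Set.Ioc (0 : ℝ) 1) (hγ : γ ∈ Set.Ioc (0 : ℝ) 1)
    (hε₀ : 0 < ε₀) (hε₀' : ε₀ ≤ 1)
    (hT : (1 / γ) * Real.log (2 / ε₀) ≤ (T : ℝ)) :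
    (∑ j ∈ Finset.range T, ((1 - p₁) * (1 - γ)) ^ j * ((1 - p₁) * γ)) +
        ((1 - p₁) * (1 - γ)) ^ T ≤
      ((1 - p₁) * (1 + ε₀ / 2) / p₁) * γ := by
  obtain ⟨hp0, hp1⟩ := hp
  obtain ⟨hγ0, hγ1⟩ := hγ
  have ha0 : (0:ℝ) ≤ 1 - p₁ := by linarith
  have hb0 : (0:ℝ) ≤ 1 - γ := by linarith
  have hε2 : (2:ℝ) ≤ 2/ε₀ := by rw [le_div_iff₀ hε₀]; linarith
  have hlogT : Real.log (2/ε₀) ≤ γ * T := by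
    rw [div_mul_eq_mul_div, one_mul, div_le_iff₀ hγ0] at hT
    linarith [hT]
  have hlog2 : Real.log 2 ≤ γ * T := le_trans (Real.log_le_log (by norm_num) hε2) hlogT
  have hl2 : (0.6931471803:ℝ) < Real.log 2 := Real.log_two_gt_d9
  have hT0 : T ≠ 0 := by
    rintro rfl
    simp only [Nat.cast_zero, mul_zero] at hlog2
    linarith
  obtain ⟨n, rfl⟩ := Nat.exists_eq_succ_of_ne_zero hT0
  have hcast : ((n+1:ℕ):ℝ) = (n:ℝ)+1 := by push_cast; ring
  rw [hcast] at hlogT hlog2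
  -- (1-γ)^(n+1) ≤ exp(-(γ*(n+1)))
  have hb : (1-γ)^(n+1) ≤ Real.exp (-(γ*((n:ℝ)+1))) := by
    have h1 : 1-γ ≤ Real.exp (-γ) := by have := Real.add_one_le_exp (-γ); linarith
    calc (1-γ)^(n+1) ≤ (Real.exp (-γ))^(n+1) := pow_le_pow_left₀ hb0 h1 _
      _ = Real.exp (-(γ*((n:ℝ)+1))) := by
          rw [← Real.exp_nat_mul]; congr 1; push_cast; ring
  have hE : Real.exp (-(γ*((n:ℝ)+1))) ≤ ε₀/2 := by
    have h2 : 2/ε₀ ≤ Real.exp (γ*((n:ℝ)+1)) := by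
      have h := Real.exp_le_exp.mpr hlogT
      rwa [Real.exp_log (by positivity)] at h
    have h3 := inv_anti₀ (by positivity : (0:ℝ) < 2/ε₀) h2
    rw [inv_div] at h3
    rw [Real.exp_neg]
    exact h3
  -- key lemma
  have hK : p₁ * (1-p₁)^n * (1-γ)^(n+1) ≤ γ * (ε₀/2) := by
    rcases Nat.eq_zero_or_pos n with hn0 | hnpos
    · -- T = 1
      subst hn0
      have hE0 : Real.exp (-γ) ≤ ε₀/2 := by
        have h := hE; norm_num at h; exact h
      have hγl : Real.log 2 ≤ γ := by norm_num at hlog2; linarith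
      have hx : 2-γ ≤ Real.exp (1-γ) := by have := Real.add_one_le_exp (1-γ); linarith
      have he : Real.exp 1 < 2.7182818286 := Real.exp_one_lt_d9
      have hez : (0:ℝ) < Real.exp 1 := Real.exp_pos 1
      have h5 : Real.exp (-γ) * Real.exp 1 = Real.exp (1-γ) := by
        rw [← Real.exp_add]; congr 1; ring
      have h6 : (2-γ)/Real.exp 1 ≤ Real.exp (-γ) := by
        rw [div_le_iff₀ hez]; linarith [h5, hx]
      have h7 : Real.exp 1 * (1-γ) ≤ γ*(2-γ) := by
        nlinarith [mul_nonneg (by linarith : (0:ℝ) ≤ γ - 0.6931471803) hb0]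
      have h8 : 1-γ ≤ γ * ((2-γ)/Real.exp 1) := by
        rw [← mul_div_assoc, le_div_iff₀ hez]; nlinarith
      have key1 : 1-γ ≤ γ * Real.exp (-γ) := by
        calc 1-γ ≤ γ * ((2-γ)/Real.exp 1) := h8
          _ ≤ γ * Real.exp (-γ) := mul_le_mul_of_nonneg_left h6 hγ0.le
      calc p₁ * (1-p₁)^0 * (1-γ)^(0+1) = p₁ * (1-γ) := by ring
        _ ≤ 1-γ := by nlinarith
        _ ≤ γ * Real.exp (-γ) := key1
        _ ≤ γ * (ε₀/2) := mul_le_mul_of_nonneg_left hE0 hγ0.le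
    · -- T ≥ 2 : show p₁*(1-p₁)^n ≤ γ
      have hpn : p₁ * (1-p₁)^n ≤ γ := by
        rcases Nat.lt_or_ge n 2 with hn2 | hn2
        · -- n = 1, T = 2
          have hn1 : n = 1 := by omega
          subst hn1
          have hγl : Real.log 2 ≤ γ * 2 := by norm_num at hlog2; linarith
          have : (1-p₁)^1 = 1-p₁ := pow_one _
          rw [this]
          nlinarith [sq_nonneg (p₁ - 1/2)]
        · -- n ≥ 2
          have hN2 : (2:ℝ) ≤ (n:ℝ) := by exact_mod_cast hn2
          set t : ℝ := p₁ * (n:ℝ) with ht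
          have htpos : 0 < t := by positivity
          have ha : (1-p₁)^n ≤ Real.exp (-t) := by
            have h1 : 1-p₁ ≤ Real.exp (-p₁) := by have := Real.add_one_le_exp (-p₁); linarith
            calc (1-p₁)^n ≤ (Real.exp (-p₁))^n := pow_le_pow_left₀ ha0 h1 _
              _ = Real.exp (-t) := by rw [← Real.exp_nat_mul]; congr 1; rw [ht]; ring
          have h9 : t * Real.exp (-t) ≤ Real.exp (-1:ℝ) := by
            have h10 : t ≤ Real.exp (t - 1) := by have := Real.add_one_le_exp (t-1); linarith
            have h11 : Real.exp (t-1) * Real.exp (-t) = Real.exp (-1:ℝ) := by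
              rw [← Real.exp_add]; congr 1; ring
            nlinarith [Real.exp_pos (-t)]
          have hepos : (0:ℝ) < Real.exp (-1:ℝ) := Real.exp_pos _
          have he : (2.7182818283:ℝ) < Real.exp 1 := Real.exp_one_gt_d9
          have hem : Real.exp (-1:ℝ) * Real.exp 1 = 1 := by
            rw [← Real.exp_add]; norm_num
          have hinv : Real.exp (-1:ℝ) < 0.3678794413 := by nlinarith
          have hγm : Real.exp (-1:ℝ) ≤ γ * (n:ℝ) := by
            have h := mul_le_mul_of_nonneg_right hlog2 (by positivity : (0:ℝ) ≤ (n:ℝ))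
            nlinarith [h, hl2, hinv]
          calc p₁ * (1-p₁)^n ≤ p₁ * Real.exp (-t) := mul_le_mul_of_nonneg_left ha hp0.le
            _ ≤ γ := by
              have h12 : p₁ * Real.exp (-t) * (n:ℝ) = t * Real.exp (-t) := by rw [ht]; ring
              nlinarith [h9, hγm, Real.exp_pos (-t)]
      calc p₁ * (1-p₁)^n * (1-γ)^(n+1) ≤ γ * (1-γ)^(n+1) :=
            mul_le_mul_of_nonneg_right hpn (pow_nonneg hb0 _)
        _ ≤ γ * Real.exp (-(γ*((n:ℝ)+1))) := mul_le_mul_of_nonneg_left hb hγ0.le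
        _ ≤ γ * (ε₀/2) := mul_le_mul_of_nonneg_left hE hγ0.le
  -- assembly
  have hK' : p₁^2 * ((1-p₁)*(1-γ))^(n+1) ≤ p₁*(1-p₁)*(γ*(ε₀/2)) := by
    have h := mul_le_mul_of_nonneg_left hK (mul_nonneg hp0.le ha0)
    calc p₁^2 * ((1-p₁)*(1-γ))^(n+1) = p₁*(1-p₁)*(p₁*(1-p₁)^n*(1-γ)^(n+1)) := by
          rw [mul_pow, pow_succ]; ring
      _ ≤ _ := h
  have hgs := geom_sum_mul ((1-p₁)*(1-γ)) (n+1)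
  have hD : (0:ℝ) < 1 - (1-p₁)*(1-γ) := by nlinarith
  rw [div_mul_eq_mul_div, le_div_iff₀ hp0, ← mul_le_mul_iff_right₀ hD, ← Finset.sum_mul]
  have hLHSeq : (1 - (1-p₁)*(1-γ)) *
      (((∑ j ∈ Finset.range (n+1), ((1-p₁)*(1-γ))^j) * ((1-p₁)*γ) + ((1-p₁)*(1-γ))^(n+1)) * p₁)
      = p₁*(1-p₁)*γ + p₁^2 * ((1-p₁)*(1-γ))^(n+1) := by
    linear_combination (-(p₁*(1-p₁)*γ)) * hgs
  rw [hLHSeq]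
  nlinarith [hK', mul_nonneg (mul_nonneg (mul_nonneg ha0 ha0) (mul_nonneg hγ0.le hγ0.le)) (by linarith : (0:ℝ) ≤ 1 + ε₀/2)]
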